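/- (Extended formulation gives same constraint set cardinality reduction) If P = {x in R^d : Ax <= b} is a polytope with vertices v_1,...,v_p and slack matrix S given by S_{ij} = b_i - (A v_j)_i, then P admits an extended formulation {x : Ax + Fy = b, y >= 0} with F in R_+^{m x q} and nonnegative V in R_+^{q x p} if and only if S factors as S = F V; consequently the minimal extension size equals the nonnegative rank of S. -/

import Mathlib

open Matrix

/-- Yannakakis's theorem: for a polytope `P = {x : Ax ≤ b}` with vertex set
`{v₁,…,v_p}` and slack matrix `S`, `S_{ij} = b_i - (A v_j)_i`, a nonnegative matrix
`F` yields an extended formulation `{x : ∃ y ≥ 0, Ax + Fy = b} = P` if and only if `S`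
factors as `S = F V` with `V` nonnegative; consequently the minimal extension size
equals the nonnegative rank of `S`. -/
theorem yannakakis (d m p : ℕ)
    (A : Matrix (Fin m) (Fin d) ℝ) (b : Fin m → ℝ) (v : Fin p → (Fin d → ℝ))
    (hcompact : IsCompact {x : Fin d → ℝ | ∀ i, (A *ᵥ x) i ≤ b i})
    (hP : {x : Fin d → ℝ | ∀ i, (A *ᵥ x) i ≤ b i} = convexHull ℝ (Set.range v))
    (hvert : ∀ j, v j ∈ Set.extremePoints ℝ {x : Fin d → ℝ | ∀ i, (A *ᵥ x) i ≤ b i})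
    (S : Matrix (Fin m) (Fin p) ℝ) (hS : ∀ i j, S i j = b i - (A *ᵥ v j) i) :
    (∀ (q : ℕ) (F : Matrix (Fin m) (Fin q) ℝ), (∀ i j, 0 ≤ F i j) →
      ({x : Fin d → ℝ | ∃ y : Fin q → ℝ, A *ᵥ x + F *ᵥ y = b ∧ ∀ j, 0 ≤ y j} =
          {x : Fin d → ℝ | ∀ i, (A *ᵥ x) i ≤ b i} ↔
        ∃ V : Matrix (Fin q) (Fin p) ℝ, (∀ i j, 0 ≤ V i j) ∧ S = F * V)) ∧
    sInf {q : ℕ | ∃ F : Matrix (Fin m) (Fin q) ℝ, (∀ i j, 0 ≤ F i j) ∧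
        {x : Fin d → ℝ | ∃ y : Fin q → ℝ, A *ᵥ x + F *ᵥ y = b ∧ ∀ j, 0 ≤ y j} =
          {x : Fin d → ℝ | ∀ i, (A *ᵥ x) i ≤ b i}} =
      sInf {q : ℕ | ∃ (F : Matrix (Fin m) (Fin q) ℝ) (V : Matrix (Fin q) (Fin p) ℝ),
        (∀ i j, 0 ≤ F i j) ∧ (∀ i j, 0 ≤ V i j) ∧ S = F * V} := by
  have main : ∀ (q : ℕ) (F : Matrix (Fin m) (Fin q) ℝ), (∀ i j, 0 ≤ F i j) →
      ({x : Fin d → ℝ | ∃ y : Fin q → ℝ, A *ᵥ x + F *ᵥ y = b ∧ ∀ j, 0 ≤ y j} =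
          {x : Fin d → ℝ | ∀ i, (A *ᵥ x) i ≤ b i} ↔
        ∃ V : Matrix (Fin q) (Fin p) ℝ, (∀ i j, 0 ≤ V i j) ∧ S = F * V) := by
    intro q F hF
    constructor
    · intro hset
      -- each vertex lies in P, hence has a witness y
      have hvP : ∀ j, ∃ y : Fin q → ℝ, A *ᵥ v j + F *ᵥ y = b ∧ ∀ k, 0 ≤ y k := by
        intro j
        have : v j ∈ {x : Fin d → ℝ | ∀ i, (A *ᵥ x) i ≤ b i} := by
          rw [hP]
          exact subset_convexHull ℝ _ ⟨j, rfl⟩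
        rw [← hset] at this
        exact this
      choose y hy hy0 using hvP
      refine ⟨fun k j => y j k, fun k j => hy0 j k, ?_⟩
      ext i j
      have := congrFun (hy j) i
      simp only [Pi.add_apply] at this
      have hFy : (F *ᵥ y j) i = ∑ k, F i k * y j k := rfl
      simp only [hS, Matrix.mul_apply]
      show b i - (A *ᵥ v j) i = ∑ k, F i k * y j k
      linarith [hFy ▸ this]
    · rintro ⟨V, hV, hSV⟩
      ext x
      simp only [Set.mem_setOf_eq]
      constructor
      · rintro ⟨y, hy, hy0⟩ i
        have := congrFun hy i
        simp only [Pi.add_apply] at this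
        have hFy0 : 0 ≤ (F *ᵥ y) i := by
          have : (F *ᵥ y) i = ∑ k, F i k * y k := rfl
          rw [this]
          exact Finset.sum_nonneg fun k _ => mul_nonneg (hF i k) (hy0 k)
        linarith
      · intro hx
        have hx' : x ∈ convexHull ℝ (Set.range v) := by rw [← hP]; exact hx
        rw [convexHull_range_eq_exists_affineCombination] at hx'
        obtain ⟨s, w, hw0, hw1, hwx⟩ := hx'
        set lam : Fin p → ℝ := fun j => if j ∈ s then w j else 0 with hlam
        have hlam0 : ∀ j, 0 ≤ lam j := by
          intro j
          simp only [hlam]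
          split
          · exact hw0 _ ‹_›
          · exact le_refl 0
        have hlam1 : ∑ j, lam j = 1 := by
          rw [hlam]
          rw [Finset.sum_ite_mem, Finset.univ_inter, hw1]
        have hxsum : x = ∑ j, lam j • v j := by
          rw [hlam]
          simp only [ite_smul, zero_smul]
          rw [Finset.sum_ite_mem, Finset.univ_inter]
          rw [← hwx, Finset.affineCombination_eq_linear_combination s v w hw1]
        refine ⟨V *ᵥ lam, ?_, fun k => ?_⟩
        swap
        · have : (V *ᵥ lam) k = ∑ j, V k j * lam j := rfl
          rw [this]
          exact Finset.sum_nonneg fun j _ => mul_nonneg (hV k j) (hlam0 j)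
        have hFV : F *ᵥ (V *ᵥ lam) = S *ᵥ lam := by
          rw [Matrix.mulVec_mulVec, ← hSV]
        rw [hFV, hxsum]
        have hAx : A *ᵥ (∑ j, lam j • v j) = ∑ j, lam j • (A *ᵥ v j) := by
          simp only [← Matrix.mulVecLin_apply, map_sum, LinearMap.map_smul]
        rw [hAx]
        funext i
        have h1 : (∑ j, lam j • (A *ᵥ v j)) i = ∑ j, lam j * (A *ᵥ v j) i := by
          simp
        have h2 : (S *ᵥ lam) i = ∑ j, (b i - (A *ᵥ v j) i) * lam j := by
          have : (S *ᵥ lam) i = ∑ j, S i j * lam j := rfl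
          rw [this]
          exact Finset.sum_congr rfl fun j _ => by rw [hS]
        rw [Pi.add_apply, h1, h2, ← Finset.sum_add_distrib]
        have : ∀ j ∈ Finset.univ, lam j * (A *ᵥ v j) i + (b i - (A *ᵥ v j) i) * lam j
            = b i * lam j := fun j _ => by ring
        rw [Finset.sum_congr rfl this, ← Finset.mul_sum, hlam1, mul_one]
  refine ⟨main, ?_⟩
  congr 1
  ext q
  simp only [Set.mem_setOf_eq]
  constructor
  · rintro ⟨F, hF, heq⟩
    obtain ⟨V, hV, hSV⟩ := (main q F hF).mp heq
    exact ⟨F, V, hF, hV, hSV⟩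
  · rintro ⟨F, V, hF, hV, hSV⟩
    exact ⟨F, hF, (main q F hF).mpr ⟨V, hV, hSV⟩⟩
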